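/- If f and g are log-concave nonnegative summable sequences on ℤ (i.e., f(n)² ≥ f(n-1)·f(n+1) for all n, with contiguous support, and similarly for g), then their convolution f*g, defined by (f*g)(n) = Σ_k f(n−k)·g(k), is log-concave. -/
import Mathlib


/-- The support of `f : ℤ → ℝ` is contiguous. -/
def ContigSupportInt (f : ℤ → ℝ) : Prop :=
  ∀ a b c : ℤ, a ≤ b → b ≤ c → 0 < f a → 0 < f c → 0 < f b

/-- `f : ℤ → [0,∞)` is log-concave: nonnegative, `f(n)² ≥ f(n-1)·f(n+1)` for all `n`,
and its support is contiguous. -/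
def IsLogConcaveInt (f : ℤ → ℝ) : Prop :=
  (∀ n, 0 ≤ f n) ∧ (∀ n : ℤ, f (n - 1) * f (n + 1) ≤ f n ^ 2) ∧ ContigSupportInt f

/-- The convolution `(f*g)(n) = Σ_k f(n−k)·g(k)`. -/
noncomputable def convInt (f g : ℤ → ℝ) (n : ℤ) : ℝ :=
  ∑' k : ℤ, f (n - k) * g k

namespace LogConcaveAux

lemma slide_nat (f : ℤ → ℝ) (hf : IsLogConcaveInt f) :
    ∀ (m : ℕ) (p : ℤ), f (p - 1) * f (p + m + 1) ≤ f p * f (p + m) := by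
  obtain ⟨hf0, hlc, hc⟩ := hf
  intro m
  induction m with
  | zero =>
    intro p
    have := hlc p
    simpa [pow_two] using this
  | succ m ih =>
    intro p
    rcases eq_or_lt_of_le (hf0 (p - 1)) with h1 | h1
    · rw [← h1, zero_mul]
      exact mul_nonneg (hf0 _) (hf0 _)
    rcases eq_or_lt_of_le (hf0 (p + (m + 1 : ℕ) + 1)) with h2 | h2
    · rw [← h2, mul_zero]
      exact mul_nonneg (hf0 _) (hf0 _)
    have hq1 : 0 < f (p + m) := hc (p - 1) (p + m) (p + (m + 1 : ℕ) + 1)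
      (by push_cast; omega) (by push_cast; omega) h1 h2
    have hq2 : 0 < f (p + m + 1) := hc (p - 1) (p + m + 1) (p + (m + 1 : ℕ) + 1)
      (by push_cast; omega) (by push_cast; omega) h1 h2
    have hIH := ih p
    have hlc' := hlc (p + m + 1)
    have e1 : (p + m + 1 : ℤ) - 1 = p + m := by ring
    have e2 : (p + (m + 1 : ℕ) + 1 : ℤ) = p + m + 1 + 1 := by push_cast; ring
    have e3 : (p + (m + 1 : ℕ) : ℤ) = p + m + 1 := by push_cast; ring
    rw [e2, e3]
    rw [e1] at hlc'
    nlinarith [mul_nonneg (hf0 (p - 1)) (hf0 (p + m + 1 + 1)), hf0 p, hf0 (p - 1)]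

/-- Key lemma: for `p ≤ q`, `f(p-1) f(q+1) ≤ f(p) f(q)`. -/
lemma slide (f : ℤ → ℝ) (hf : IsLogConcaveInt f) {p q : ℤ} (h : p ≤ q) :
    f (p - 1) * f (q + 1) ≤ f p * f q := by
  have hm : q = p + ((q - p).toNat : ℤ) := by omega
  rw [hm]
  exact slide_nat f hf _ p

/-- Variant: for `p ≤ q`, `f(p-1) f(q) ≤ f(p) f(q-1)`. -/
lemma slide' (f : ℤ → ℝ) (hf : IsLogConcaveInt f) {p q : ℤ} (h : p ≤ q) :
    f (p - 1) * f q ≤ f p * f (q - 1) := by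
  rcases eq_or_lt_of_le h with rfl | h
  · rw [mul_comm]
  · have := slide f hf (show p ≤ q - 1 by omega)
    simpa using this

lemma summable_conv (f g : ℤ → ℝ) (hf0 : ∀ n, 0 ≤ f n) (hg0 : ∀ n, 0 ≤ g n)
    (hfs : Summable f) (hgs : Summable g) (n : ℤ) :
    Summable (fun k : ℤ => f (n - k) * g k) := by
  apply Summable.of_nonneg_of_le (fun k => mul_nonneg (hf0 _) (hg0 _))
    (fun k => mul_le_mul_of_nonneg_right (Summable.le_tsum hfs (n - k) (fun _ _ => hf0 _)) (hg0 k))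
  exact hgs.mul_left _

end LogConcaveAux

open LogConcaveAux

set_option maxHeartbeats 1000000 in
/-- The convolution of two log-concave nonnegative summable sequences on `ℤ` is
log-concave. -/
theorem isLogConcaveInt_conv (f g : ℤ → ℝ)
    (hf : IsLogConcaveInt f) (hg : IsLogConcaveInt g)
    (hfs : Summable f) (hgs : Summable g) :
    IsLogConcaveInt (convInt f g) := by
  obtain ⟨hf0, hflc, hfc⟩ := hf
  obtain ⟨hg0, hglc, hgc⟩ := hg
  have hsum : ∀ n : ℤ, Summable (fun k : ℤ => f (n - k) * g k) :=
    summable_conv f g hf0 hg0 hfs hgs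
  have hnn : ∀ n : ℤ, 0 ≤ convInt f g n :=
    fun n => tsum_nonneg (fun k => mul_nonneg (hf0 _) (hg0 _))
  -- positivity characterization
  have hpos_iff : ∀ n : ℤ, 0 < convInt f g n ↔ ∃ k, 0 < f (n - k) * g k := by
    intro n
    constructor
    · intro h
      by_contra hcon
      push_neg at hcon
      have : ∀ k : ℤ, f (n - k) * g k = 0 :=
        fun k => le_antisymm (hcon k) (mul_nonneg (hf0 _) (hg0 _))
      simp [convInt, this] at h
    · rintro ⟨k, hk⟩
      exact lt_of_lt_of_le hk (Summable.le_tsum (hsum n) k (fun _ _ => mul_nonneg (hf0 _) (hg0 _)))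
  -- step lemma for contiguity
  have hstep : ∀ m c : ℤ, m < c → 0 < convInt f g m → 0 < convInt f g c →
      0 < convInt f g (m + 1) := by
    intro m c hmc hm hc
    obtain ⟨k₁, hk₁⟩ := (hpos_iff m).1 hm
    obtain ⟨k₂, hk₂⟩ := (hpos_iff c).1 hc
    have extract : ∀ x y : ℝ, 0 ≤ x → 0 ≤ y → 0 < x * y → 0 < x ∧ 0 < y := by
      intro x y hx hy hxy
      constructor <;> nlinarith
    obtain ⟨hf₁, hg₁⟩ := extract _ _ (hf0 (m - k₁)) (hg0 k₁) hk₁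
    obtain ⟨hf₂, hg₂⟩ := extract _ _ (hf0 (c - k₂)) (hg0 k₂) hk₂
    rcases lt_or_ge (m - k₁) (c - k₂) with hx | hx
    · -- advance in f
      have hfb : 0 < f (m - k₁ + 1) := hfc (m - k₁) (m - k₁ + 1) (c - k₂)
        (by omega) (by omega) hf₁ hf₂
      apply (hpos_iff (m + 1)).2
      exact ⟨k₁, by rw [show m + 1 - k₁ = m - k₁ + 1 by ring]; exact mul_pos hfb hg₁⟩
    · -- then k₁ < k₂, advance in g
      have hky : k₁ < k₂ := by omega
      have hgb : 0 < g (k₁ + 1) := hgc k₁ (k₁ + 1) k₂ (by omega) (by omega) hg₁ hg₂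
      apply (hpos_iff (m + 1)).2
      refine ⟨k₁ + 1, mul_pos ?_ hgb⟩
      have : m + 1 - (k₁ + 1) = m - k₁ := by ring
      rw [this]; exact hf₁
  refine ⟨hnn, ?_, ?_⟩
  · -- log-concavity inequality via Binet–Cauchy
    intro n
    set a : ℤ → ℝ := fun k => f (n - k) with ha
    set b : ℤ → ℝ := fun k => f (n - 1 - k) with hb
    set c : ℤ → ℝ := fun k => g k with hcdef
    set d : ℤ → ℝ := fun k => g (k + 1) with hd
    have hac : Summable (fun k => a k * c k) := hsum n
    have hbc : Summable (fun k => b k * c k) := by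
      have := hsum (n - 1)
      exact this.congr (fun k => rfl)
    have had : Summable (fun k => a k * d k) := by
      have h2 := (hsum (n + 1)).comp_injective (add_left_injective (1 : ℤ))
      refine h2.congr fun k => ?_
      show f (n + 1 - (k + 1)) * g (k + 1) = a k * d k
      have e : n + 1 - (k + 1) = n - k := by ring
      rw [e]
    have hbd : Summable (fun k => b k * d k) := by
      have h2 := (hsum n).comp_injective (add_left_injective (1 : ℤ))
      refine h2.congr fun k => ?_
      show f (n - (k + 1)) * g (k + 1) = b k * d k
      have e : n - (k + 1) = n - 1 - k := by ring
      rw [e]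
    -- tsum identifications
    have hconv_n : convInt f g n = ∑' k, a k * c k := rfl
    have hconv_n' : convInt f g n = ∑' k, b k * d k := by
      rw [convInt, ← (Equiv.addRight (1 : ℤ)).tsum_eq (fun k => f (n - k) * g k)]
      apply tsum_congr
      intro k
      simp only [Equiv.coe_addRight, hb, hd]
      congr 2
      ring
    have hconv_p : convInt f g (n + 1) = ∑' k, a k * d k := by
      rw [convInt, ← (Equiv.addRight (1 : ℤ)).tsum_eq (fun k => f (n + 1 - k) * g k)]
      apply tsum_congr
      intro k
      simp only [Equiv.coe_addRight, ha, hd]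
      congr 2
      ring
    have hconv_m : convInt f g (n - 1) = ∑' k, b k * c k := rfl
    -- Binet–Cauchy
    have hprod1 : Summable (fun p : ℤ × ℤ => (a p.1 * c p.1) * (b p.2 * d p.2)) :=
      Summable.mul_of_nonneg hac hbd (fun k => mul_nonneg (hf0 _) (hg0 _))
        (fun k => mul_nonneg (hf0 _) (hg0 _))
    have hprod2 : Summable (fun p : ℤ × ℤ => (a p.1 * d p.1) * (b p.2 * c p.2)) :=
      Summable.mul_of_nonneg had hbc (fun k => mul_nonneg (hf0 _) (hg0 _))
        (fun k => mul_nonneg (hf0 _) (hg0 _))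
    have hmul1 : convInt f g n * convInt f g n
        = ∑' p : ℤ × ℤ, (a p.1 * c p.1) * (b p.2 * d p.2) := by
      nth_rewrite 2 [hconv_n']
      rw [hconv_n]
      exact Summable.tsum_mul_tsum hac hbd hprod1
    have hmul2 : convInt f g (n + 1) * convInt f g (n - 1)
        = ∑' p : ℤ × ℤ, (a p.1 * d p.1) * (b p.2 * c p.2) := by
      rw [hconv_p, hconv_m]
      exact Summable.tsum_mul_tsum had hbc hprod2
    set T : ℤ × ℤ → ℝ :=
      fun p => (a p.1 * c p.1) * (b p.2 * d p.2) - (a p.1 * d p.1) * (b p.2 * c p.2) with hT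
    have hTsum : Summable T := hprod1.sub hprod2
    have hdiff : convInt f g n ^ 2 - convInt f g (n + 1) * convInt f g (n - 1)
        = ∑' p, T p := by
      rw [pow_two, hmul1, hmul2, hT]
      exact (Summable.tsum_sub hprod1 hprod2).symm
    -- symmetrization
    have hswap : Summable (fun p : ℤ × ℤ => T p.swap) :=
      (Equiv.prodComm ℤ ℤ).summable_iff.2 hTsum
    have hswap_eq : ∑' p : ℤ × ℤ, T p.swap = ∑' p, T p :=
      (Equiv.prodComm ℤ ℤ).tsum_eq T
    -- pointwise nonnegativity of symmetrized term
    have hpt : ∀ p : ℤ × ℤ, 0 ≤ T p + T p.swap := by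
      rintro ⟨j, k⟩
      have key : ∀ j k : ℤ, j ≤ k →
          a j * b k - a k * b j ≤ 0 ∧ c j * d k - c k * d j ≤ 0 := by
        intro j k hjk
        constructor
        · have h1 := slide' f ⟨hf0, hflc, hfc⟩ (show n - k ≤ n - j by omega)
          simp only [ha, hb]
          have e1 : n - 1 - k = (n - k) - 1 := by ring
          have e2 : n - 1 - j = (n - j) - 1 := by ring
          rw [e1, e2]
          nlinarith [h1]
        · have h1 := slide' g ⟨hg0, hglc, hgc⟩ (show j + 1 ≤ k + 1 by omega)
          simp only [hcdef, hd]
          simp only [add_sub_cancel_right] at h1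
          nlinarith [h1]
      have hTexp : T (j, k) + T (j, k).swap
          = (a j * b k - a k * b j) * (c j * d k - c k * d j) := by
        simp only [hT, Prod.swap]
        ring
      rw [hTexp]
      rcases le_total j k with h | h
      · obtain ⟨h1, h2⟩ := key j k h
        nlinarith [h1, h2]
      · obtain ⟨h1, h2⟩ := key k j h
        have h1' : 0 ≤ a j * b k - a k * b j := by nlinarith
        have h2' : 0 ≤ c j * d k - c k * d j := by nlinarith
        exact mul_nonneg h1' h2'
    have hsumnn : 0 ≤ ∑' p : ℤ × ℤ, (T p + T p.swap) := tsum_nonneg hpt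
    have : ∑' p : ℤ × ℤ, (T p + T p.swap) = ∑' p, T p + ∑' p : ℤ × ℤ, T p.swap :=
      Summable.tsum_add hTsum hswap
    rw [this, hswap_eq] at hsumnn
    -- conclude
    nlinarith [hdiff, hsumnn]
  · -- contiguity
    intro p q r hpq hqr hp hr
    have key : ∀ dn : ℕ, ∀ b : ℤ, b = p + dn → b ≤ r → 0 < convInt f g b := by
      intro dn
      induction dn with
      | zero => intro b hb _; rw [hb]; simpa using hp
      | succ dn ih =>
        intro b hb hbr
        have h1 : 0 < convInt f g (p + dn) := ih (p + dn) rfl (by push_cast at hb ⊢; omega)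
        have h2 : p + (dn : ℤ) < r := by push_cast at hb; omega
        have := hstep (p + dn) r h2 h1 hr
        rw [hb]
        convert this using 2
        push_cast
        ring
    exact key (q - p).toNat q (by omega) hqr
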